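/- Let G₁ and G₂ be finite simple graphs with nonempty disjoint vertex sets, and let n₁ = |V(G₁)|. Then α(G₁ ▽ G₂) ≥ n₁ + α(G₂) and α(G₁ ⊻ G₂) ≥ n₁ + α(G₂), where ▽ denotes the neighbors-splitting join and ⊻ denotes the non-neighbors-splitting join. -/

import Mathlib

open scoped Classical

noncomputable def indepNum {V : Type*} [Fintype V] (G : SimpleGraph V) : ℕ :=
  sSup { n : ℕ | ∃ s : Finset V, (∀ i ∈ s, ∀ j ∈ s, i ≠ j → ¬ G.Adj i j) ∧ s.card = n }

/-- The neighbors-splitting (NS) join of `G₁` and `G₂`: vertices are the vertices of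
`G₁` (first summand), the primed copies of the vertices of `G₁` (second summand), and
the vertices of `G₂` (third summand). -/
def nsJoin {α β : Type*} (G₁ : SimpleGraph α) (G₂ : SimpleGraph β) :
    SimpleGraph (α ⊕ α ⊕ β) where
  Adj x y :=
    match x, y with
    | .inl u, .inl v => G₁.Adj u v
    | .inl u, .inr (.inl v) => G₁.Adj u v
    | .inr (.inl u), .inl v => G₁.Adj u v
    | .inl _, .inr (.inr _) => True
    | .inr (.inr _), .inl _ => True
    | .inr (.inr b), .inr (.inr c) => G₂.Adj b c
    | _, _ => False
  symm := by
    constructor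
    rintro (u|u|b) (v|v|c) h
    · exact G₁.adj_symm h
    · exact G₁.adj_symm h
    · trivial
    · exact G₁.adj_symm h
    · exact h
    · exact h
    · trivial
    · exact h
    · exact G₂.adj_symm h
  loopless := by
    constructor
    rintro (u|u|b) h
    · exact G₁.irrefl h
    · exact h
    · exact G₂.irrefl h

/-- The non-neighbors-splitting (NNS) join of `G₁` and `G₂`: vertices are the vertices
of `G₁` (first summand), the primed copies of the vertices of `G₁` (second summand),
and the vertices of `G₂` (third summand). -/
def nnsJoin {α β : Type*} (G₁ : SimpleGraph α) (G₂ : SimpleGraph β) :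
    SimpleGraph (α ⊕ α ⊕ β) where
  Adj x y :=
    match x, y with
    | .inl u, .inl v => G₁.Adj u v
    | .inl u, .inr (.inl v) => u ≠ v ∧ ¬ G₁.Adj u v
    | .inr (.inl u), .inl v => u ≠ v ∧ ¬ G₁.Adj u v
    | .inl _, .inr (.inr _) => True
    | .inr (.inr _), .inl _ => True
    | .inr (.inr b), .inr (.inr c) => G₂.Adj b c
    | _, _ => False
  symm := by
    constructor
    rintro (u|u|b) (v|v|c) h
    · exact G₁.adj_symm h
    · obtain ⟨h1, h2⟩ := h; exact ⟨Ne.symm h1, fun a => h2 (G₁.adj_symm a)⟩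
    · trivial
    · obtain ⟨h1, h2⟩ := h; exact ⟨Ne.symm h1, fun a => h2 (G₁.adj_symm a)⟩
    · exact h
    · exact h
    · trivial
    · exact h
    · exact G₂.adj_symm h
  loopless := by
    constructor
    rintro (u|u|b) h
    · exact G₁.irrefl h
    · exact h
    · exact G₂.irrefl h

lemma indepNum_aux {α β : Type*} [Fintype α] [Fintype β] (G₂ : SimpleGraph β)
    (H : SimpleGraph (α ⊕ α ⊕ β))
    (h1 : ∀ u v : α, ¬ H.Adj (.inr (.inl u)) (.inr (.inl v)))
    (h2 : ∀ (u : α) (b : β), ¬ H.Adj (.inr (.inl u)) (.inr (.inr b)))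
    (h3 : ∀ b c : β, H.Adj (.inr (.inr b)) (.inr (.inr c)) → G₂.Adj b c) :
    Fintype.card α + indepNum G₂ ≤ indepNum H := by
  have bdd2 : BddAbove { n : ℕ | ∃ s : Finset β,
      (∀ i ∈ s, ∀ j ∈ s, i ≠ j → ¬ G₂.Adj i j) ∧ s.card = n } :=
    ⟨Fintype.card β, fun n ⟨s, _, hc⟩ => hc ▸ s.card_le_univ⟩
  have bddH : BddAbove { n : ℕ | ∃ s : Finset (α ⊕ α ⊕ β),
      (∀ i ∈ s, ∀ j ∈ s, i ≠ j → ¬ H.Adj i j) ∧ s.card = n } :=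
    ⟨Fintype.card (α ⊕ α ⊕ β), fun n ⟨s, _, hc⟩ => hc ▸ s.card_le_univ⟩
  have hne : (indepNum G₂) ∈
      { n : ℕ | ∃ s : Finset β, (∀ i ∈ s, ∀ j ∈ s, i ≠ j → ¬ G₂.Adj i j) ∧ s.card = n } := by
    rw [indepNum]
    exact Nat.sSup_mem ⟨0, ∅, by simp⟩ bdd2
  obtain ⟨s, hs, hcard⟩ := hne
  set f : α → α ⊕ α ⊕ β := fun u => .inr (.inl u) with hf
  set g : β → α ⊕ α ⊕ β := fun b => .inr (.inr b) with hg
  have hfinj : Function.Injective f := fun a b h => by simpa [hf] using h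
  have hginj : Function.Injective g := fun a b h => by simpa [hg] using h
  set t : Finset (α ⊕ α ⊕ β) := Finset.univ.image f ∪ s.image g with ht
  have hdisj : Disjoint (Finset.univ.image f) (s.image g) := by
    rw [Finset.disjoint_left]
    rintro x hx hx'
    obtain ⟨u, _, rfl⟩ := Finset.mem_image.mp hx
    obtain ⟨b, _, hb⟩ := Finset.mem_image.mp hx'
    simp [hf, hg] at hb
  have htcard : t.card = Fintype.card α + indepNum G₂ := by
    rw [ht, Finset.card_union_of_disjoint hdisj, Finset.card_image_of_injective _ hfinj,
      Finset.card_image_of_injective _ hginj, Finset.card_univ, hcard]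
  rw [indepNum]; apply le_csSup bddH
  refine ⟨t, ?_, htcard⟩
  intro x hx y hy hxy hadj
  rw [ht, Finset.mem_union] at hx hy
  rcases hx with hx | hx <;> rcases hy with hy | hy
  · obtain ⟨u, _, rfl⟩ := Finset.mem_image.mp hx
    obtain ⟨v, _, rfl⟩ := Finset.mem_image.mp hy
    exact h1 u v hadj
  · obtain ⟨u, _, rfl⟩ := Finset.mem_image.mp hx
    obtain ⟨b, _, rfl⟩ := Finset.mem_image.mp hy
    exact h2 u b hadj
  · obtain ⟨b, _, rfl⟩ := Finset.mem_image.mp hx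
    obtain ⟨u, _, rfl⟩ := Finset.mem_image.mp hy
    exact h2 u b (H.adj_symm hadj)
  · obtain ⟨b, hb, rfl⟩ := Finset.mem_image.mp hx
    obtain ⟨c, hc, rfl⟩ := Finset.mem_image.mp hy
    have hbc : b ≠ c := fun h => hxy (by rw [h])
    exact hs b hb c hc hbc (h3 b c hadj)

theorem stmt7 {α β : Type*} [Fintype α] [Fintype β] [Nonempty α] [Nonempty β]
    (G₁ : SimpleGraph α) (G₂ : SimpleGraph β) :
    Fintype.card α + indepNum G₂ ≤ indepNum (nsJoin G₁ G₂) ∧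
    Fintype.card α + indepNum G₂ ≤ indepNum (nnsJoin G₁ G₂) := by
  constructor
  · exact indepNum_aux G₂ (nsJoin G₁ G₂) (fun u v h => h) (fun u b h => h)
      (fun b c h => h)
  · exact indepNum_aux G₂ (nnsJoin G₁ G₂) (fun u v h => h) (fun u b h => h)
      (fun b c h => h)
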